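/- For every oriented graph D, the directed incidence matrix of D is a Farkas matrix. -/

import Mathlib

open scoped Classical

noncomputable section

/-- A family of vectors `v i ∈ ℤ^α` (indexed by a finite type `ι`) is Farkas-related. -/
def FarkasRelated {α ι : Type*} [Fintype ι] (v : ι → α → ℤ) : Prop :=
  ∀ a b : ι → ℤ, (∀ i, a i ≤ b i) →
    ∀ w : α → ℤ, w ∈ Submodule.span ℤ (Set.range v) →
      (∃ x : ι → ℚ, (∀ i, (a i : ℚ) ≤ x i ∧ x i ≤ (b i : ℚ)) ∧
        (fun j => ((w j : ℚ))) = ∑ i, x i • (fun j => ((v i j : ℚ)))) →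
      ∃ y : ι → ℤ, (∀ i, a i ≤ y i ∧ y i ≤ b i) ∧ w = ∑ i, y i • v i

/-- The column `f_i - f_j` (over ℤ) of the directed incidence matrix corresponding to
an arc `e = (i → j)`. -/
def arcVecZ {n : ℕ} (i j : Fin n) : Fin n → ℤ := fun k =>
  (if k = i then 1 else 0) - (if k = j then 1 else 0)

namespace FarkasAux

def IsInt (q : ℚ) : Prop := ∃ z : ℤ, q = (z : ℚ)

lemma IsInt.add {p q : ℚ} (hp : IsInt p) (hq : IsInt q) : IsInt (p + q) := by
  obtain ⟨a, rfl⟩ := hp; obtain ⟨b, rfl⟩ := hq; exact ⟨a + b, by push_cast; ring⟩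

lemma IsInt.neg {p : ℚ} (hp : IsInt p) : IsInt (-p) := by
  obtain ⟨a, rfl⟩ := hp; exact ⟨-a, by push_cast; ring⟩

lemma IsInt.sub {p q : ℚ} (hp : IsInt p) (hq : IsInt q) : IsInt (p - q) := by
  obtain ⟨a, rfl⟩ := hp; obtain ⟨b, rfl⟩ := hq; exact ⟨a - b, by push_cast; ring⟩

lemma IsInt.mul {p q : ℚ} (hp : IsInt p) (hq : IsInt q) : IsInt (p * q) := by
  obtain ⟨a, rfl⟩ := hp; obtain ⟨b, rfl⟩ := hq; exact ⟨a * b, by push_cast; ring⟩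

lemma IsInt.sum {ι : Type*} (s : Finset ι) (f : ι → ℚ) (h : ∀ i ∈ s, IsInt (f i)) :
    IsInt (∑ i ∈ s, f i) := by
  classical
  induction s using Finset.induction_on with
  | empty => exact ⟨0, by simp⟩
  | insert _ _ hnot ih =>
    rw [Finset.sum_insert hnot]
    exact (h _ (Finset.mem_insert_self _ _)).add
      (ih fun i hi => h i (Finset.mem_insert_of_mem hi))

variable {n : ℕ} {D : Fin n → Fin n → Prop}

abbrev Arc (D : Fin n → Fin n → Prop) := {p : Fin n × Fin n // D p.1 p.2}

def vQ (e : Arc D) : Fin n → ℚ := fun k => ((arcVecZ e.1.1 e.1.2 k : ℤ) : ℚ)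

lemma vQ_apply (e : Arc D) (k : Fin n) :
    vQ e k = (if k = e.1.1 then 1 else 0) - (if k = e.1.2 then 1 else 0) := by
  simp [vQ, arcVecZ, apply_ite (Int.cast : ℤ → ℚ)]

/-- indicator vector -/
def sing (k : Fin n) : Fin n → ℚ := fun l => if l = k then 1 else 0

/-- the sum-of-coordinates linear functional -/
def sigma (n : ℕ) : (Fin n → ℚ) →ₗ[ℚ] ℚ := ∑ k, LinearMap.proj k

lemma sigma_apply (z : Fin n → ℚ) : sigma n z = ∑ k, z k := by
  simp [sigma]

lemma sigma_vQ (e : Arc D) : sigma n (vQ e) = 0 := by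
  rw [sigma_apply]
  simp [vQ_apply, Finset.sum_sub_distrib]

lemma sigma_sing (k : Fin n) : sigma n (sing k) = 1 := by
  rw [sigma_apply]; simp [sing]

lemma vQ_eq_sing (e : Arc D) : vQ e = sing e.1.1 - sing e.1.2 := by
  funext k; simp [vQ_apply, sing]

lemma exists_dep (hloop : ∀ i, ¬ D i i) (F : Finset (Arc D)) (hFne : F.Nonempty)
    (hdeg : ∀ k : Fin n, (∃ e ∈ F, e.1.1 = k ∨ e.1.2 = k) →
      2 ≤ (F.filter (fun e => e.1.1 = k ∨ e.1.2 = k)).card) :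
    ∃ c : Arc D → ℚ, (∀ e, e ∉ F → c e = 0) ∧ (∃ e, c e ≠ 0) ∧
      ∑ e, c e • vQ e = 0 := by
  set T : Finset (Fin n) := F.biUnion (fun e => {e.1.1, e.1.2}) with hT
  have hmemT : ∀ k : Fin n, k ∈ T ↔ ∃ e ∈ F, e.1.1 = k ∨ e.1.2 = k := by
    intro k
    simp [hT, Finset.mem_biUnion, eq_comm]
  have hne : ∀ e : Arc D, e.1.1 ≠ e.1.2 := by
    intro e he
    have h2 := e.2
    rw [he] at h2
    exact hloop _ h2
  -- endpoints in T
  have hendT : ∀ e ∈ F, e.1.1 ∈ T ∧ e.1.2 ∈ T := by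
    intro e he
    exact ⟨(hmemT _).2 ⟨e, he, Or.inl rfl⟩, (hmemT _).2 ⟨e, he, Or.inr rfl⟩⟩
  -- double counting : T.card ≤ F.card
  have hTF : T.card ≤ F.card := by
    have key : ∑ k ∈ T, (F.filter (fun e => e.1.1 = k ∨ e.1.2 = k)).card = 2 * F.card := by
      have : ∀ k ∈ T, (F.filter (fun e => e.1.1 = k ∨ e.1.2 = k)).card
          = ∑ e ∈ F, (if e.1.1 = k ∨ e.1.2 = k then 1 else 0) := by
        intro k _
        rw [Finset.card_filter]
      rw [Finset.sum_congr rfl this, Finset.sum_comm]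
      have : ∀ e ∈ F, ∑ k ∈ T, (if e.1.1 = k ∨ e.1.2 = k then 1 else 0) = 2 := by
        intro e he
        have : (T.filter (fun k => e.1.1 = k ∨ e.1.2 = k)) = {e.1.1, e.1.2} := by
          ext k
          simp only [Finset.mem_filter, Finset.mem_insert, Finset.mem_singleton]
          constructor
          · rintro ⟨-, h | h⟩
            · exact Or.inl h.symm
            · exact Or.inr h.symm
          · rintro (rfl | rfl)
            · exact ⟨(hendT e he).1, Or.inl rfl⟩
            · exact ⟨(hendT e he).2, Or.inr rfl⟩
        rw [← Finset.card_filter, this, Finset.card_insert_of_notMem (by simpa using hne e),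
          Finset.card_singleton]
      rw [Finset.sum_congr rfl this, Finset.sum_const, smul_eq_mul, mul_comm]
    have lower : 2 * T.card ≤ ∑ k ∈ T, (F.filter (fun e => e.1.1 = k ∨ e.1.2 = k)).card := by
      rw [two_mul]
      calc T.card + T.card = ∑ _k ∈ T, 2 := by rw [Finset.sum_const]; ring
      _ ≤ _ := Finset.sum_le_sum (fun k hk => hdeg k ((hmemT k).1 hk))
    omega
  -- linear dependence
  have hnli : ¬ LinearIndependent ℚ (fun e : {e // e ∈ F} => vQ e.1) := by
    intro li
    -- the all-ones-on-T vector
    set u : Fin n → ℚ := ∑ k ∈ T, sing k with hu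
    have hσu : sigma n u = T.card := by
      rw [hu, map_sum, Finset.sum_congr rfl (fun k _ => sigma_sing k), Finset.sum_const,
        nsmul_eq_mul, mul_one]
    have hspan : Submodule.span ℚ (Set.range (fun e : {e // e ∈ F} => vQ e.1))
        ≤ LinearMap.ker (sigma n) := by
      rw [Submodule.span_le]
      rintro _ ⟨e, rfl⟩
      exact sigma_vQ e.1
    have hunot : u ∉ Submodule.span ℚ (Set.range (fun e : {e // e ∈ F} => vQ e.1)) := by
      intro hmem
      have h0 : sigma n u = 0 := hspan hmem
      rw [hσu] at h0
      obtain ⟨e, he⟩ := hFne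
      have hpos : 0 < T.card := Finset.card_pos.2 ⟨_, (hendT e he).1⟩
      exact hpos.ne' (by exact_mod_cast h0)
    have li2 : LinearIndependent ℚ
        (fun o => Option.casesOn' o u (fun e : {e // e ∈ F} => vQ e.1)) := li.option hunot
    -- move into the span M of the sing's over T
    set M : Submodule ℚ (Fin n → ℚ) :=
      Submodule.span ℚ (Set.range (fun k : {k // k ∈ T} => sing k.1)) with hM
    have hsingM : ∀ k ∈ T, sing k ∈ M := by
      intro k hk
      exact Submodule.subset_span ⟨⟨k, hk⟩, rfl⟩
    have hmemM : ∀ o : Option {e // e ∈ F},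
        (Option.casesOn' o u (fun e : {e // e ∈ F} => vQ e.1)) ∈ M := by
      rintro (_ | e)
      · exact Submodule.sum_mem _ (fun k hk => hsingM k hk)
      · rw [Option.casesOn'_coe, vQ_eq_sing]
        exact sub_mem (hsingM _ (hendT e.1 e.2).1) (hsingM _ (hendT e.1 e.2).2)
    set bfam : Option {e // e ∈ F} → M :=
      fun o => ⟨_, hmemM o⟩ with hb
    have liM : LinearIndependent ℚ bfam := by
      apply LinearIndependent.of_comp M.subtype
      exact li2
    have hcard1 : Fintype.card (Option {e // e ∈ F}) ≤ Module.finrank ℚ M :=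
      liM.fintype_card_le_finrank
    have hcard2 : Module.finrank ℚ M ≤ T.card := by
      have := finrank_range_le_card (R := ℚ) (fun k : {k // k ∈ T} => sing (n := n) k.1)
      rw [Set.finrank] at this
      simpa using this
    rw [Fintype.card_option, Fintype.card_coe] at hcard1
    omega
  obtain ⟨g, hg, e1, hg1⟩ := Fintype.not_linearIndependent_iff.1 hnli
  set c : Arc D → ℚ := fun e => if h : e ∈ F then g ⟨e, h⟩ else 0 with hc
  have hc0 : ∀ e, e ∉ F → c e = 0 := fun e he => by simp [hc, he]
  have hcsum : ∑ e, c e • vQ e = 0 := by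
    rw [← Finset.sum_subset (Finset.subset_univ F)
      (fun e _ he => by rw [hc0 e he, zero_smul])]
    rw [← Finset.sum_attach F (fun e => c e • vQ e), ← hg, Finset.univ_eq_attach]
    exact Finset.sum_congr rfl (fun e _ => by simp [hc, e.2])
  exact ⟨c, hc0, ⟨e1.1, by simpa [hc, e1.2] using hg1⟩, hcsum⟩


def fracset (x : Arc D → ℚ) : Finset (Arc D) :=
  Finset.univ.filter (fun e => ¬ IsInt (x e))

lemma deg_ge_two (hloop : ∀ i, ¬ D i i) (x : Arc D → ℚ)
    (hint : ∀ k, IsInt (∑ e, x e * vQ e k)) (k : Fin n)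
    (h : ∃ e ∈ fracset x, e.1.1 = k ∨ e.1.2 = k) :
    2 ≤ ((fracset x).filter (fun e => e.1.1 = k ∨ e.1.2 = k)).card := by
  by_contra hlt
  push_neg at hlt
  obtain ⟨e0, he0F, he0inc⟩ := h
  have he0 : e0 ∈ (fracset x).filter (fun e => e.1.1 = k ∨ e.1.2 = k) :=
    Finset.mem_filter.2 ⟨he0F, he0inc⟩
  have hcard1 : ((fracset x).filter (fun e => e.1.1 = k ∨ e.1.2 = k)).card = 1 := by
    have := Finset.card_pos.2 ⟨e0, he0⟩
    omega
  obtain ⟨a, ha⟩ := Finset.card_eq_one.1 hcard1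
  have hae : a = e0 := by rw [ha] at he0; exact (Finset.mem_singleton.1 he0).symm
  rw [hae] at ha
  have hsplit := Finset.sum_filter_add_sum_filter_not Finset.univ
    (fun e => e ∈ (fracset x).filter (fun e => e.1.1 = k ∨ e.1.2 = k))
    (fun e => x e * vQ e k)
  have h1 : ∑ e ∈ Finset.univ.filter
      (fun e => e ∈ (fracset x).filter (fun e => e.1.1 = k ∨ e.1.2 = k)),
      x e * vQ e k = x e0 * vQ e0 k := by
    rw [Finset.filter_univ_mem, ha, Finset.sum_singleton]
  have h2 : IsInt (∑ e ∈ Finset.univ.filter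
      (fun e => ¬ e ∈ (fracset x).filter (fun e => e.1.1 = k ∨ e.1.2 = k)),
      x e * vQ e k) := by
    apply IsInt.sum
    intro e he
    simp only [Finset.mem_filter, Finset.mem_univ, true_and, not_and] at he
    by_cases hinc : e.1.1 = k ∨ e.1.2 = k
    · -- then e ∉ fracset, so x e integral
      have hxe : IsInt (x e) := by
        by_contra hc
        exact (he (by simp [fracset, hc])) hinc
      exact hxe.mul ⟨arcVecZ e.1.1 e.1.2 k, rfl⟩
    · -- vQ e k = 0
      push_neg at hinc
      have : vQ e k = 0 := by
        rw [vQ_apply, if_neg (fun hh => hinc.1 hh.symm), if_neg (fun hh => hinc.2 hh.symm)]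
        ring
      rw [this, mul_zero]
      exact ⟨0, by norm_num⟩
  have hx0int : IsInt (x e0 * vQ e0 k) := by
    have : x e0 * vQ e0 k = (∑ e, x e * vQ e k) - ∑ e ∈ Finset.univ.filter
        (fun e => ¬ e ∈ (fracset x).filter (fun e => e.1.1 = k ∨ e.1.2 = k)),
        x e * vQ e k := by
      rw [← h1]; rw [← hsplit]; ring
    rw [this]
    exact (hint k).sub h2
  have hne0 : e0.1.1 ≠ e0.1.2 := by
    intro hh
    have h2 := e0.2
    rw [hh] at h2
    exact hloop _ h2
  have hfrac : ¬ IsInt (x e0) := by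
    have := he0F
    simp only [fracset, Finset.mem_filter, Finset.mem_univ, true_and] at this
    exact this
  rcases he0inc with h | h
  · have : vQ e0 k = 1 := by
      rw [vQ_apply, if_pos h.symm, if_neg (fun hh => hne0 (h.trans hh))]
      ring
    rw [this, mul_one] at hx0int
    exact hfrac hx0int
  · have : vQ e0 k = -1 := by
      rw [vQ_apply, if_neg (fun hh => hne0 (hh.symm.trans h.symm)), if_pos h.symm]
      ring
    rw [this] at hx0int
    have := hx0int.neg
    rw [show -(x e0 * -1) = x e0 by ring] at this
    exact hfrac this


lemma all_int_case (x : Arc D → ℚ) (a b : Arc D → ℤ)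
    (hx : ∀ e, (a e : ℚ) ≤ x e ∧ x e ≤ (b e : ℚ))
    (hall : ∀ e, IsInt (x e))
    (w : Fin n → ℤ)
    (heq : (fun k => (w k : ℚ)) = ∑ e, x e • vQ e) :
    ∃ y : Arc D → ℤ, (∀ e, a e ≤ y e ∧ y e ≤ b e) ∧
      w = ∑ e, y e • arcVecZ e.1.1 e.1.2 := by
  choose y hy using hall
  refine ⟨y, ?_, ?_⟩
  · intro e
    constructor
    · have h := (hx e).1; rw [hy e] at h; exact_mod_cast h
    · have h := (hx e).2; rw [hy e] at h; exact_mod_cast h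
  · funext k
    have hk := congrFun heq k
    rw [Finset.sum_apply] at hk
    apply @Int.cast_injective ℚ _
    rw [hk, Finset.sum_apply]
    push_cast
    apply Finset.sum_congr rfl
    intro e _
    simp only [Pi.smul_apply, smul_eq_mul, Int.cast_mul, hy e, vQ]

lemma key (hloop : ∀ i, ¬ D i i) (a b : Arc D → ℤ) (w : Fin n → ℤ) :
    ∀ N : ℕ, ∀ x : Arc D → ℚ, (fracset x).card ≤ N →
    (∀ e, (a e : ℚ) ≤ x e ∧ x e ≤ (b e : ℚ)) →
    ((fun k => (w k : ℚ)) = ∑ e, x e • vQ e) →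
    ∃ y : Arc D → ℤ, (∀ e, a e ≤ y e ∧ y e ≤ b e) ∧
      w = ∑ e, y e • arcVecZ e.1.1 e.1.2 := by
  intro N
  induction N with
  | zero =>
    intro x hcard hx heq
    have hall : ∀ e, IsInt (x e) := by
      intro e; by_contra hc
      have hmem : e ∈ fracset x := by simp [fracset, hc]
      have := Finset.card_pos.2 ⟨e, hmem⟩
      omega
    exact all_int_case x a b hx hall w heq
  | succ N ih =>
    intro x hcard hx heq
    by_cases hall : ∀ e, IsInt (x e)
    · exact all_int_case x a b hx hall w heq
    push_neg at hall
    obtain ⟨eb, heb⟩ := hall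
    have hFne : (fracset x).Nonempty := ⟨eb, by simp [fracset, heb]⟩
    have hint : ∀ k, IsInt (∑ e, x e * vQ e k) := by
      intro k
      have hk := congrFun heq k
      rw [Finset.sum_apply] at hk
      simp only [Pi.smul_apply, smul_eq_mul] at hk
      exact ⟨w k, hk.symm⟩
    obtain ⟨c, hc0, ⟨e1, hce1⟩, hcsum⟩ := exists_dep hloop (fracset x) hFne
      (fun k hk => deg_ge_two hloop x hint k hk)
    set S : Finset (Arc D) := (fracset x).filter (fun e => c e ≠ 0) with hS
    have hSne : S.Nonempty := by
      refine ⟨e1, ?_⟩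
      have he1F : e1 ∈ fracset x := by
        by_contra hcc
        exact hce1 (hc0 e1 hcc)
      rw [hS]; exact Finset.mem_filter.2 ⟨he1F, hce1⟩
    have hSmem : ∀ e ∈ S, e ∈ fracset x ∧ c e ≠ 0 := by
      intro e he; rw [hS] at he; exact Finset.mem_filter.1 he
    have hfr : ∀ e ∈ fracset x, (⌊x e⌋ : ℚ) < x e ∧ x e < (⌈x e⌉ : ℚ) := by
      intro e he
      have hni : ¬ IsInt (x e) := by simpa [fracset] using he
      constructor
      · rcases lt_or_eq_of_le (Int.floor_le (x e)) with h | h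
        · exact h
        · exact absurd ⟨⌊x e⌋, h.symm⟩ hni
      · rcases lt_or_eq_of_le (Int.le_ceil (x e)) with h | h
        · exact h
        · exact absurd ⟨⌈x e⌉, h⟩ hni
    set δ : Arc D → ℚ := fun e =>
      if 0 < c e then ((⌈x e⌉ : ℚ) - x e) / c e else (x e - (⌊x e⌋ : ℚ)) / (-c e) with hδ
    have hδpos : ∀ e ∈ S, 0 < δ e := by
      intro e he
      obtain ⟨heF, hec⟩ := hSmem e he
      obtain ⟨hf1, hf2⟩ := hfr e heF
      rw [hδ]
      by_cases hpos : 0 < c e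
      · simp only [if_pos hpos]; exact div_pos (by linarith) hpos
      · simp only [if_neg hpos]
        have : c e < 0 := lt_of_le_of_ne (not_lt.1 hpos) hec
        exact div_pos (by linarith) (by linarith)
    set t : ℚ := S.inf' hSne δ with ht
    have htpos : 0 < t := by
      rw [ht]
      exact (Finset.lt_inf'_iff hSne).2 hδpos
    have hts : ∀ e ∈ S, t ≤ δ e := by
      intro e he; rw [ht]; exact Finset.inf'_le _ he
    set x' : Arc D → ℚ := fun e => x e + t * c e with hx'
    have hx'eq : ∀ e, e ∉ S → x' e = x e := by
      intro e he
      have hce : c e = 0 := by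
        by_cases heF : e ∈ fracset x
        · by_contra hcc
          exact he (by rw [hS]; exact Finset.mem_filter.2 ⟨heF, hcc⟩)
        · exact hc0 e heF
      rw [hx']; simp [hce]
    have hbox : ∀ e ∈ S, (⌊x e⌋ : ℚ) ≤ x' e ∧ x' e ≤ (⌈x e⌉ : ℚ) := by
      intro e he
      obtain ⟨heF, hec⟩ := hSmem e he
      obtain ⟨hf1, hf2⟩ := hfr e heF
      have hte := hts e he
      rw [hx']
      simp only []
      by_cases hpos : 0 < c e
      · have hδe : δ e * c e = (⌈x e⌉:ℚ) - x e := by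
          rw [hδ]; simp only [if_pos hpos]
          exact div_mul_cancel₀ _ hpos.ne'
        have hmul : t * c e ≤ δ e * c e := mul_le_mul_of_nonneg_right hte hpos.le
        constructor
        · nlinarith [mul_pos htpos hpos]
        · nlinarith
      · have hneg : c e < 0 := lt_of_le_of_ne (not_lt.1 hpos) hec
        have h0 : -c e ≠ 0 := by simpa using hec
        have hδe : δ e * c e = -(x e - (⌊x e⌋:ℚ)) := by
          rw [hδ]; simp only [if_neg hpos]
          field_simp
        have hmul : t * (-c e) ≤ δ e * (-c e) :=
          mul_le_mul_of_nonneg_right hte (by linarith)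
        constructor
        · nlinarith
        · nlinarith [mul_pos htpos (neg_pos.2 hneg)]
    have hx'bounds : ∀ e, (a e:ℚ) ≤ x' e ∧ x' e ≤ (b e:ℚ) := by
      intro e
      by_cases he : e ∈ S
      · obtain ⟨h1, h2⟩ := hbox e he
        have hfl : (a e : ℚ) ≤ ((⌊x e⌋ : ℤ) : ℚ) :=
          Int.cast_le.2 (Int.le_floor.2 (hx e).1)
        have hcl : ((⌈x e⌉ : ℤ) : ℚ) ≤ (b e:ℚ) :=
          Int.cast_le.2 (Int.ceil_le.2 (hx e).2)
        exact ⟨le_trans hfl h1, le_trans h2 hcl⟩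
      · rw [hx'eq e he]; exact hx e
    have heq' : (fun k => (w k:ℚ)) = ∑ e, x' e • vQ e := by
      rw [heq]
      have hstep : ∑ e, x' e • vQ e = ∑ e, x e • vQ e + t • ∑ e, c e • vQ e := by
        rw [Finset.smul_sum, ← Finset.sum_add_distrib]
        apply Finset.sum_congr rfl
        intro e _
        rw [hx']
        simp only []
        rw [add_smul, smul_smul]
      rw [hstep, hcsum, smul_zero, add_zero]
    obtain ⟨e0, he0S, he0t⟩ := Finset.exists_mem_eq_inf' hSne δ
    have he0int : IsInt (x' e0) := by
      obtain ⟨heF, hec⟩ := hSmem e0 he0S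
      have htδ : t = δ e0 := by rw [ht, he0t]
      rw [hx']
      simp only []
      by_cases hpos : 0 < c e0
      · refine ⟨⌈x e0⌉, ?_⟩
        rw [htδ, hδ]
        simp only [if_pos hpos]
        rw [div_mul_cancel₀ _ hpos.ne']
        ring
      · have hneg : c e0 < 0 := lt_of_le_of_ne (not_lt.1 hpos) hec
        refine ⟨⌊x e0⌋, ?_⟩
        rw [htδ, hδ]
        simp only [if_neg hpos]
        rw [div_neg, neg_mul, div_mul_cancel₀ _ hec]
        ring
    have hsub : fracset x' ⊆ (fracset x).erase e0 := by
      intro e he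
      have hni : ¬ IsInt (x' e) := by simpa [fracset] using he
      apply Finset.mem_erase.2
      refine ⟨fun hh => hni (hh ▸ he0int), ?_⟩
      by_cases heS : e ∈ S
      · exact (hSmem e heS).1
      · rw [hx'eq e heS] at hni
        simp [fracset, hni]
    have he0F : e0 ∈ fracset x := (hSmem e0 he0S).1
    have hcard' : (fracset x').card ≤ N := by
      have h1 : (fracset x').card ≤ ((fracset x).erase e0).card := Finset.card_le_card hsub
      have h2 : ((fracset x).erase e0).card = (fracset x).card - 1 :=
        Finset.card_erase_of_mem he0F
      have h3 : 0 < (fracset x).card := Finset.card_pos.2 hFne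
      omega
    exact ih x' hcard' hx'bounds heq'


end FarkasAux

/-- **Proposition 4.7**: for every oriented graph `D` (no loops, no multiple arcs), the
columns of the directed incidence matrix of `D` are Farkas-related, i.e. the directed
incidence matrix is a Farkas matrix. -/
theorem oriented_incidence_farkas {n : ℕ} (D : Fin n → Fin n → Prop)
    (hloop : ∀ i, ¬ D i i) (hmult : ∀ i j, D i j → ¬ D j i) :
    FarkasRelated (fun e : {p : Fin n × Fin n // D p.1 p.2} => arcVecZ e.1.1 e.1.2) := by
  intro a b hab w hw hx
  obtain ⟨x, hxb, heq⟩ := hx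
  obtain ⟨y, hyb, hyeq⟩ := FarkasAux.key hloop a b w
    (FarkasAux.fracset x).card x le_rfl hxb heq
  exact ⟨y, hyb, hyeq⟩
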